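/- For all positive integers i and j, Σ_{m=1}^∞ (−1)^{v₂(i)+v₂(m)} α(i,m) α(m,j) equals 1 if i = j and 0 otherwise (the sum is finite, since α(i,m) = 0 for m < i and α(m,j) = 0 for m > j). Equivalently, the inverse of the matrix Z = (α(i,j)) is X·Z·X, where X is the diagonal matrix with (i,i) entry (−1)^{v₂(i)}. -/

import Mathlib

open ArithmeticFunction Finset
open scoped ArithmeticFunction.zeta ArithmeticFunction.Moebius

noncomputable def ff : ArithmeticFunction ℤ := ↑(ζ : ArithmeticFunction ℕ) - 1

/-- evaluation as an additive hom -/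
def evalAt (M : ℕ) : ArithmeticFunction ℤ →+ ℤ where
  toFun F := F M
  map_zero' := zero_apply
  map_add' _ _ := add_apply

lemma ff_apply (n : ℕ) : ff n = if 2 ≤ n then 1 else 0 := by
  have h : ff n = (↑(ζ : ArithmeticFunction ℕ) : ArithmeticFunction ℤ) n - (1 : ArithmeticFunction ℤ) n :=
    map_sub (evalAt n) _ _
  rw [h, natCoe_apply, zeta_apply, one_apply]
  rcases n with _ | _ | n <;> simp

lemma ff_pow_eq_zero {a M : ℕ} (h : M < 2 ^ a) : (ff ^ a) M = 0 := by
  induction a generalizing M with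
  | zero =>
    interval_cases M
    simp [pow_zero, one_apply]
  | succ a ih =>
    rw [pow_succ, mul_apply]
    apply Finset.sum_eq_zero
    intro p hp
    rw [Nat.mem_divisorsAntidiagonal] at hp
    by_cases h1 : p.1 < 2 ^ a
    · rw [ih h1, zero_mul]
    · by_cases h2 : p.2 < 2
      · rw [ff_apply, if_neg (by omega), mul_zero]
      · exfalso
        push_neg at h1 h2
        have : 2 ^ a * 2 ≤ p.1 * p.2 := Nat.mul_le_mul h1 h2
        rw [hp.1] at this
        rw [pow_succ] at h
        omega

/-- `alpha k m` is the number of `k`-tuples `(m₁, …, m_k)` of integers, each `≥ 2`,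
whose product is `m`. -/
noncomputable def alpha (k m : ℕ) : ℕ :=
  Nat.card {f : Fin k → ℕ // (∀ i, 2 ≤ f i) ∧ ∏ i, f i = m}

lemma prod_ne_zero {k : ℕ} (g : Fin k → ℕ) (hg : ∀ i, 2 ≤ g i) : ∏ i, g i ≠ 0 := by
  intro h
  obtain ⟨i, -, hi⟩ := Finset.prod_eq_zero_iff.mp h
  have := hg i; omega

instance alphaFinite (k M : ℕ) : Finite {f : Fin k → ℕ // (∀ i, 2 ≤ f i) ∧ ∏ i, f i = M} := by
  have hb : ∀ x : {f : Fin k → ℕ // (∀ i, 2 ≤ f i) ∧ ∏ i, f i = M}, ∀ i, x.1 i < M + 1 := by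
    rintro ⟨g, hg, hp⟩ i
    show g i < M + 1
    have hM : M ≠ 0 := hp ▸ prod_ne_zero g hg
    have : g i ∣ M := hp ▸ Finset.dvd_prod_of_mem g (Finset.mem_univ i)
    have := Nat.le_of_dvd (Nat.pos_of_ne_zero hM) this
    omega
  apply Finite.of_injective (fun x => (fun i => (⟨x.1 i, hb x i⟩ : Fin (M + 1))))
  intro a b h
  ext i
  exact congrArg Fin.val (congrFun h i)

lemma alpha_zero (M : ℕ) : alpha 0 M = if M = 1 then 1 else 0 := by
  unfold alpha
  split
  · subst ‹M = 1›
    rw [Nat.card_eq_one_iff_unique]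
    constructor
    · constructor
      rintro ⟨g, -, -⟩ ⟨g', -, -⟩
      ext i; exact i.elim0
    · exact ⟨⟨fun i => i.elim0, fun i => i.elim0, by simp⟩⟩
  · have : IsEmpty {f : Fin 0 → ℕ // (∀ i, 2 ≤ f i) ∧ ∏ i, f i = M} := by
      constructor; rintro ⟨g, -, hp⟩
      simp at hp; omega
    exact Nat.card_of_isEmpty

lemma nat_card_sigma {ι : Type*} [Fintype ι] (f : ι → Type*) [∀ i, Finite (f i)] :
    Nat.card (Σ i, f i) = ∑ i, Nat.card (f i) := by
  classical
  haveI := fun i => Fintype.ofFinite (f i)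
  simp [Nat.card_eq_fintype_card, Fintype.card_sigma]

lemma alpha_succ (k M : ℕ) :
    alpha (k + 1) M = ∑ p ∈ M.divisorsAntidiagonal, if 2 ≤ p.1 then alpha k p.2 else 0 := by
  classical
  have hfib : ∀ x : {f : Fin (k+1) → ℕ // (∀ i, 2 ≤ f i) ∧ ∏ i, f i = M},
      (x.1 0, ∏ i : Fin k, x.1 i.succ) ∈ M.divisorsAntidiagonal := by
    rintro ⟨g, hg, hp⟩
    rw [Nat.mem_divisorsAntidiagonal]
    exact ⟨(Fin.prod_univ_succ g).symm.trans hp, hp ▸ prod_ne_zero g hg⟩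
  let F : {f : Fin (k+1) → ℕ // (∀ i, 2 ≤ f i) ∧ ∏ i, f i = M} → ↥(M.divisorsAntidiagonal) :=
    fun x => ⟨(x.1 0, ∏ i : Fin k, x.1 i.succ), hfib x⟩
  have e2 : ∀ p : ↥(M.divisorsAntidiagonal),
      Nat.card {x // F x = p} = if 2 ≤ (p : ℕ × ℕ).1 then alpha k (p : ℕ × ℕ).2 else 0 := by
    rintro ⟨⟨u, v⟩, hp⟩
    by_cases hu : 2 ≤ u
    · rw [if_pos hu]
      apply Nat.card_congr
      refine ⟨fun x => ⟨Fin.tail x.1.1, fun i => x.1.2.1 i.succ, ?_⟩,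
              fun g => ⟨⟨Fin.cons u g.1, ?_, ?_⟩, ?_⟩, ?_, ?_⟩
      · have h2 := congrArg Prod.snd (Subtype.ext_iff.mp x.2)
        simpa [F, Fin.tail] using h2
      · intro i
        refine Fin.cases ?_ ?_ i
        · simpa using hu
        · intro i; simpa using g.2.1 i
      · rw [Fin.prod_univ_succ]
        simp only [Fin.cons_zero, Fin.cons_succ]
        rw [show (∏ i : Fin k, g.1 i) = v from g.2.2]
        exact (Nat.mem_divisorsAntidiagonal.mp hp).1
      · apply Subtype.ext
        simp only [F]
        refine Prod.ext ?_ ?_ <;> simp [Fin.cons_zero, Fin.cons_succ]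
        exact g.2.2
      · rintro ⟨⟨g, hg⟩, hx⟩
        apply Subtype.ext; apply Subtype.ext
        have h0 : g 0 = u := by
          have := congrArg Prod.fst (Subtype.ext_iff.mp hx)
          simpa [F] using this
        show Fin.cons u (Fin.tail g) = g
        rw [← h0]
        exact Fin.cons_self_tail g
      · intro g
        apply Subtype.ext
        simp [F, Fin.tail_cons]
    · rw [if_neg hu]
      have : IsEmpty {x // F x = ⟨(u, v), hp⟩} := by
        constructor
        rintro ⟨⟨g, hg, hgp⟩, hx⟩
        have h0 : g 0 = u := by
          have := congrArg Prod.fst (Subtype.ext_iff.mp hx)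
          simpa [F] using this
        exact hu (h0 ▸ hg 0)
      exact Nat.card_of_isEmpty
  calc alpha (k+1) M = Nat.card {f : Fin (k+1) → ℕ // (∀ i, 2 ≤ f i) ∧ ∏ i, f i = M} := rfl
    _ = Nat.card ((p : ↥(M.divisorsAntidiagonal)) × {x // F x = p}) :=
        (Nat.card_congr (Equiv.sigmaFiberEquiv F)).symm
    _ = ∑ p : ↥(M.divisorsAntidiagonal), Nat.card {x // F x = p} := nat_card_sigma _
    _ = ∑ p : ↥(M.divisorsAntidiagonal), (if 2 ≤ (p : ℕ × ℕ).1 then alpha k (p : ℕ × ℕ).2 else 0) :=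
        Finset.sum_congr rfl (fun p _ => e2 p)
    _ = ∑ p ∈ M.divisorsAntidiagonal, (if 2 ≤ p.1 then alpha k p.2 else 0) :=
        Finset.sum_coe_sort M.divisorsAntidiagonal (fun p => if 2 ≤ p.1 then alpha k p.2 else 0)


lemma alpha_eq (k M : ℕ) : ((alpha k M : ℤ)) = (ff ^ k) M := by
  induction k generalizing M with
  | zero =>
    rw [alpha_zero, pow_zero, one_apply]
    split <;> simp
  | succ k ih =>
    rw [alpha_succ, pow_succ', mul_apply]
    push_cast
    apply Finset.sum_congr rfl
    intro p hp
    rw [ff_apply, ← ih p.2]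
    split <;> simp

def dd (b : ℕ) : ArithmeticFunction ℤ := ⟨fun n => if n = b ∧ n ≠ 0 then 1 else 0, by simp⟩

lemma dd_apply (b n : ℕ) : dd b n = if n = b ∧ n ≠ 0 then 1 else 0 := rfl

lemma mul_dd_apply (F : ArithmeticFunction ℤ) {b : ℕ} (hb : b ≠ 0) (m : ℕ) :
    (F * dd b) m = if b ∣ m then F (m / b) else 0 := by
  rcases eq_or_ne m 0 with rfl | hm
  · simp [ArithmeticFunction.map_zero]
  rw [mul_apply]
  by_cases hd : b ∣ m
  · rw [if_pos hd]
    rw [Finset.sum_eq_single (m / b, b)]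
    · rw [dd_apply]
      simp [hb, hm]
    · rintro ⟨x, y⟩ hxy hne
      rw [Nat.mem_divisorsAntidiagonal] at hxy
      rw [dd_apply]
      by_cases hy : y = b
      · exfalso
        apply hne
        subst hy
        have hx : m / y = x := Nat.div_eq_of_eq_mul_left (Nat.pos_of_ne_zero hb) (by rw [← hxy.1, mul_comm])
        rw [← hx]
      · simp [hy]
    · intro h
      exfalso
      apply h
      rw [Nat.mem_divisorsAntidiagonal]
      exact ⟨Nat.div_mul_cancel hd, hm⟩
  · rw [if_neg hd]
    apply Finset.sum_eq_zero
    rintro ⟨x, y⟩ hxy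
    rw [Nat.mem_divisorsAntidiagonal] at hxy
    rw [dd_apply]
    by_cases hy : y = b
    · exact absurd ⟨x, by rw [← hxy.1, hy, mul_comm]⟩ hd
    · simp [hy]

lemma dd_mul_dd {a b : ℕ} (ha : a ≠ 0) (hb : b ≠ 0) : dd a * dd b = dd (a * b) := by
  ext n
  rw [mul_dd_apply _ hb, dd_apply]
  by_cases hd : b ∣ n
  · rw [if_pos hd, dd_apply]
    have hc : n = a * b ↔ (n / b = a ∧ n / b ≠ 0) := by
      constructor
      · rintro rfl
        rw [Nat.mul_div_cancel _ (Nat.pos_of_ne_zero hb)]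
        exact ⟨rfl, ha⟩
      · rintro ⟨h1, -⟩
        rw [← h1, Nat.div_mul_cancel hd]
    by_cases h : n = a * b
    · rw [if_pos (hc.mp h), if_pos ⟨h, by simp [h, ha, hb, Nat.mul_ne_zero]⟩]
    · rw [if_neg (fun hh => h (hc.mpr hh)), if_neg (fun hh => h hh.1)]
  · rw [if_neg hd]
    have hn : n ≠ a * b := fun h => hd ⟨a, by rw [h, mul_comm]⟩
    rw [dd_apply, if_neg (fun hh => hn hh.1)]


/-- The 2-adic valuation `v₂(i)`. -/
def v2 (i : ℕ) : ℕ := i.factorization 2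

def od (i : ℕ) : ℕ := i / 2 ^ v2 i

lemma pow_v2_mul_od (n : ℕ) : 2 ^ v2 n * od n = n :=
  Nat.ordProj_mul_ordCompl_eq_self n 2

lemma od_ne_zero {n : ℕ} (hn : n ≠ 0) : od n ≠ 0 := by
  have := pow_v2_mul_od n
  intro h; rw [h, mul_zero] at this; exact hn this.symm

lemma od_not_two_dvd {n : ℕ} (hn : n ≠ 0) : ¬ 2 ∣ od n :=
  Nat.not_dvd_ordCompl Nat.prime_two hn

lemma v2_two_pow_mul {a b : ℕ} (hb : ¬ 2 ∣ b) : v2 (2 ^ a * b) = a := by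
  have hb0 : b ≠ 0 := fun h => hb (h ▸ dvd_zero 2)
  unfold v2
  rw [Nat.factorization_mul (pow_ne_zero a two_ne_zero) hb0]
  simp [Nat.Prime.factorization_pow, Nat.prime_two.factorization, Nat.factorization_eq_zero_of_not_dvd hb]

lemma od_two_pow_mul {a b : ℕ} (hb : ¬ 2 ∣ b) : od (2 ^ a * b) = b := by
  have hb0 : b ≠ 0 := fun h => hb (h ▸ dvd_zero 2)
  have h1 := pow_v2_mul_od (2 ^ a * b)
  rw [v2_two_pow_mul hb] at h1
  exact Nat.eq_of_mul_eq_mul_left (Nat.pos_of_ne_zero (pow_ne_zero a two_ne_zero)) h1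

lemma v2_mul {x y : ℕ} (hx : x ≠ 0) (hy : y ≠ 0) : v2 (x * y) = v2 x + v2 y := by
  unfold v2
  rw [Nat.factorization_mul hx hy]
  simp

lemma od_mul {x y : ℕ} (hx : x ≠ 0) (hy : y ≠ 0) : od (x * y) = od x * od y := by
  have h1 : 2 ^ (v2 x + v2 y) * (od x * od y) = x * y := by
    rw [pow_add]
    calc 2 ^ v2 x * 2 ^ v2 y * (od x * od y)
        = (2 ^ v2 x * od x) * (2 ^ v2 y * od y) := by ring
      _ = x * y := by rw [pow_v2_mul_od, pow_v2_mul_od]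
  have h2 : ¬ 2 ∣ od x * od y := by
    intro h
    rcases (Nat.prime_two.dvd_mul).mp h with h | h
    · exact od_not_two_dvd hx h
    · exact od_not_two_dvd hy h
  calc od (x * y) = od (2 ^ (v2 x + v2 y) * (od x * od y)) := by rw [h1]
    _ = od x * od y := od_two_pow_mul h2

noncomputable def Phi (n : ℕ) : ArithmeticFunction ℤ := ff ^ v2 n * dd (od n)

lemma sg_phi_mul {x y : ℕ} (hx : x ≠ 0) (hy : y ≠ 0) : Phi (x * y) = Phi x * Phi y := by
  unfold Phi
  rw [v2_mul hx hy, od_mul hx hy, pow_add, ← dd_mul_dd (od_ne_zero hx) (od_ne_zero hy)]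
  ring

lemma v2_one : v2 1 = 0 := by simp [v2]

lemma od_one : od 1 = 1 := by simp [od, v2_one]

lemma v2_odd {b : ℕ} (hb : ¬ 2 ∣ b) : v2 b = 0 :=
  Nat.factorization_eq_zero_of_not_dvd hb

lemma od_odd {b : ℕ} (hb : ¬ 2 ∣ b) : od b = b := by
  simp [od, v2_odd hb]

/-- The `(i,j)` entry `α(i,j)` of the matrix `Z`: writing `i = 2^k · d` with `d` odd
(`k = v₂(i)`), `α(i,j) = δ_{i,j}` if `k = 0`, and for `k ≥ 1`, `α(i,j) = α_k(j/d)`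
if `d ∣ j` and `0` otherwise. -/
noncomputable def alphaEnt (i j : ℕ) : ℕ :=
  if v2 i = 0 then (if i = j then 1 else 0)
  else if (i / 2 ^ v2 i) ∣ j then alpha (v2 i) (j / (i / 2 ^ v2 i))
  else 0

lemma alphaEnt_eq {i : ℕ} (hi : i ≠ 0) (n : ℕ) :
    (alphaEnt i n : ℤ) = (ff ^ v2 i * dd (od i)) n := by
  unfold alphaEnt
  by_cases h : v2 i = 0
  · rw [if_pos h, h, pow_zero, one_mul, dd_apply]
    have hoi : od i = i := by simp [od, h]
    rw [hoi]
    by_cases he : i = n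
    · subst he; simp [hi]
    · simp [he, Ne.symm he]
  · rw [if_neg h, mul_dd_apply _ (od_ne_zero hi) n]
    show ((if od i ∣ n then alpha (v2 i) (n / od i) else 0 : ℕ) : ℤ) = _
    split
    · exact alpha_eq _ _
    · simp


lemma phi_eq_zero {x u : ℕ} (hx : x ≠ 0) (hux : u < x) : Phi x u = 0 := by
  unfold Phi
  rw [mul_dd_apply _ (od_ne_zero hx) u]
  split
  · apply ff_pow_eq_zero
    rw [Nat.div_lt_iff_lt_mul (Nat.pos_of_ne_zero (od_ne_zero hx))]
    rw [pow_v2_mul_od]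
    exact hux
  · rfl

noncomputable def Vv (F : ArithmeticFunction ℤ) (j : ℕ) : ℤ :=
  ∑ m ∈ Icc 1 j, F m * ((-1) ^ v2 m * Phi m j)

lemma V_mul (F G : ArithmeticFunction ℤ) {j : ℕ} (hj : j ≠ 0) :
    Vv (F * G) j = ∑ p ∈ j.divisorsAntidiagonal, Vv F p.1 * Vv G p.2 := by
  classical
  set t : ℕ × ℕ → ℤ := fun q =>
    F q.1 * G q.2 * ((-1) ^ v2 q.1 * (-1) ^ v2 q.2 * ∑ p ∈ j.divisorsAntidiagonal,
      Phi q.1 p.1 * Phi q.2 p.2) with ht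
  set S : Finset (ℕ × ℕ) := (Icc 1 j).biUnion (fun m => m.divisorsAntidiagonal) with hS
  have hSmem : ∀ q ∈ S, q.1 ≠ 0 ∧ q.2 ≠ 0 ∧ q.1 * q.2 ≤ j := by
    intro q hq
    rw [hS, Finset.mem_biUnion] at hq
    obtain ⟨m, hm, hqm⟩ := hq
    rw [Nat.mem_divisorsAntidiagonal] at hqm
    rw [Finset.mem_Icc] at hm
    refine ⟨?_, ?_, hqm.1 ▸ hm.2⟩ <;> rintro h <;> rw [h] at hqm <;> simp at hqm <;> omega
  have step1 : Vv (F * G) j = ∑ m ∈ Icc 1 j, ∑ q ∈ m.divisorsAntidiagonal, t q := by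
    unfold Vv
    apply Finset.sum_congr rfl
    intro m hm
    rw [Finset.mem_Icc] at hm
    rw [mul_apply, Finset.sum_mul]
    apply Finset.sum_congr rfl
    intro q hq
    rw [Nat.mem_divisorsAntidiagonal] at hq
    have hq1 : q.1 ≠ 0 := by rintro h; rw [h] at hq; simp at hq; omega
    have hq2 : q.2 ≠ 0 := by rintro h; rw [h] at hq; simp at hq; omega
    rw [ht]
    simp only
    rw [← mul_apply, ← sg_phi_mul hq1 hq2, ← pow_add, ← v2_mul hq1 hq2, hq.1]
  have hdisj : (↑(Icc 1 j) : Set ℕ).PairwiseDisjoint (fun m => m.divisorsAntidiagonal) := by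
    intro m hm m' hm' hne
    simp only [Function.onFun, Finset.disjoint_left]
    intro q hq hq'
    rw [Nat.mem_divisorsAntidiagonal] at hq hq'
    exact hne (hq.1.symm.trans hq'.1)
  have step2 : ∑ m ∈ Icc 1 j, ∑ q ∈ m.divisorsAntidiagonal, t q = ∑ q ∈ S, t q :=
    (Finset.sum_biUnion hdisj).symm
  have step3 : ∑ q ∈ S, t q =
      ∑ p ∈ j.divisorsAntidiagonal, ∑ q ∈ S,
        (F q.1 * ((-1) ^ v2 q.1 * Phi q.1 p.1)) * (G q.2 * ((-1) ^ v2 q.2 * Phi q.2 p.2)) := by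
    have hterm : ∀ q ∈ S, t q = ∑ p ∈ j.divisorsAntidiagonal,
        (F q.1 * ((-1) ^ v2 q.1 * Phi q.1 p.1)) * (G q.2 * ((-1) ^ v2 q.2 * Phi q.2 p.2)) := by
      intro q _
      simp only [ht, Finset.mul_sum]
      apply Finset.sum_congr rfl
      intro p _
      ring
    rw [Finset.sum_congr rfl hterm, Finset.sum_comm]
  have step4 : ∀ p ∈ j.divisorsAntidiagonal,
      ∑ q ∈ S, (F q.1 * ((-1) ^ v2 q.1 * Phi q.1 p.1)) * (G q.2 * ((-1) ^ v2 q.2 * Phi q.2 p.2))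
        = Vv F p.1 * Vv G p.2 := by
    intro p hp
    rw [Nat.mem_divisorsAntidiagonal] at hp
    have hp0 : p.1 ≠ 0 ∧ p.2 ≠ 0 := by
      constructor <;> rintro h <;> rw [h] at hp <;> simp at hp <;> exact hj (by omega)
    have hTS : Finset.Icc 1 p.1 ×ˢ Finset.Icc 1 p.2 ⊆ S := by
      intro q hq
      rw [Finset.mem_product, Finset.mem_Icc, Finset.mem_Icc] at hq
      rw [hS, Finset.mem_biUnion]
      refine ⟨q.1 * q.2, ?_, ?_⟩
      · rw [Finset.mem_Icc]
        constructor
        · exact Nat.one_le_iff_ne_zero.mpr (Nat.mul_ne_zero (by omega) (by omega))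
        · calc q.1 * q.2 ≤ p.1 * p.2 := Nat.mul_le_mul hq.1.2 hq.2.2
            _ = j := hp.1
      · rw [Nat.mem_divisorsAntidiagonal]
        exact ⟨rfl, Nat.mul_ne_zero (by omega) (by omega)⟩
    rw [← Finset.sum_subset hTS ?_]
    · rw [Finset.sum_product]
      unfold Vv
      rw [Finset.sum_mul_sum]
    · intro q hqS hqT
      have hm := hSmem q hqS
      rw [Finset.mem_product, Finset.mem_Icc, Finset.mem_Icc] at hqT
      have hor : p.1 < q.1 ∨ p.2 < q.2 := by
        rcases hm with ⟨h1, h2, -⟩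
        omega
      rcases hor with h | h
      · rw [phi_eq_zero hm.1 h]
        ring
      · rw [phi_eq_zero hm.2.1 h]
        ring
  rw [step1, step2, step3]
  exact Finset.sum_congr rfl step4


lemma neg_ff_pow_apply (n x : ℕ) : ((-ff) ^ n) x = (-1 : ℤ) ^ n * (ff ^ n) x := by
  rw [neg_pow]
  rcases Nat.even_or_odd n with h | h
  · rw [h.neg_one_pow, one_mul, h.neg_one_pow, one_mul]
  · rw [h.neg_one_pow, neg_one_mul, h.neg_one_pow, neg_one_mul]
    exact map_neg (evalAt x) _

lemma alt_moebius {M A : ℕ} (h : M < 2 ^ (A + 1)) :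
    ∑ a ∈ range (A + 1), (-1 : ℤ) ^ a * (ff ^ a) M = μ M := by
  have hz : (↑(ζ : ArithmeticFunction ℕ) : ArithmeticFunction ℤ) = ff + 1 := by
    rw [ff]; ring
  have key : (∑ a ∈ range (A + 1), (-ff) ^ a) * (↑(ζ : ArithmeticFunction ℕ) : ArithmeticFunction ℤ)
      = 1 - (-ff) ^ (A + 1) := by
    have hg := geom_sum_mul (-ff) (A + 1)
    rw [hz]
    linear_combination -hg
  have h2 : (∑ a ∈ range (A + 1), (-ff) ^ a) = (1 - (-ff) ^ (A + 1)) * μ := by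
    calc (∑ a ∈ range (A + 1), (-ff) ^ a)
        = (∑ a ∈ range (A + 1), (-ff) ^ a) * ((μ : ArithmeticFunction ℤ) * ↑(ζ : ArithmeticFunction ℕ)) := by
          rw [moebius_mul_coe_zeta, mul_one]
      _ = ((∑ a ∈ range (A + 1), (-ff) ^ a) * ↑(ζ : ArithmeticFunction ℕ)) * μ := by ring
      _ = (1 - (-ff) ^ (A + 1)) * μ := by rw [key]
  have h3 : (1 - (-ff) ^ (A + 1)) * μ = μ - (-ff) ^ (A + 1) * μ := by ring
  have h4 : ((-ff) ^ (A + 1) * μ) M = 0 := by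
    rw [mul_apply]
    apply Finset.sum_eq_zero
    intro q hq
    rw [Nat.mem_divisorsAntidiagonal] at hq
    have hq1 : q.1 ≤ M := by
      rcases Nat.le_of_dvd (Nat.pos_of_ne_zero hq.2) ⟨q.2, hq.1.symm⟩ with h'
      exact h'
    rw [neg_ff_pow_apply, ff_pow_eq_zero (lt_of_le_of_lt hq1 h), mul_zero, zero_mul]
  have h5 : (∑ a ∈ range (A + 1), (-ff) ^ a) M = μ M := by
    rw [h2, h3]
    have hs : (μ - (-ff) ^ (A + 1) * μ) M = μ M - ((-ff) ^ (A + 1) * μ) M :=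
      map_sub (evalAt M) _ _
    rw [hs, h4, sub_zero]
  have hsum : (∑ a ∈ range (A + 1), (-ff) ^ a) M = ∑ a ∈ range (A + 1), ((-ff) ^ a) M :=
    map_sum (evalAt M) _ _
  rw [← h5, hsum]
  apply Finset.sum_congr rfl
  intro a _
  exact (neg_ff_pow_apply a M).symm

lemma V_one {j : ℕ} (hj : j ≠ 0) : Vv 1 j = if j = 1 then 1 else 0 := by
  unfold Vv
  rw [Finset.sum_eq_single 1]
  · rw [one_apply, if_pos rfl, v2_one, Phi, v2_one, od_one, pow_zero, pow_zero, one_mul,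
      one_mul, one_mul, dd_apply]
    by_cases h : j = 1 <;> simp [h, hj]
  · intro m _ hm
    rw [one_apply, if_neg hm, zero_mul]
  · intro h
    exact absurd (Finset.mem_Icc.mpr ⟨le_refl 1, Nat.one_le_iff_ne_zero.mpr hj⟩) h

lemma V_dd {b : ℕ} (hb2 : ¬ 2 ∣ b) {j : ℕ} (hj : j ≠ 0) :
    Vv (dd b) j = if j = b then 1 else 0 := by
  have hb : b ≠ 0 := fun h => hb2 (h ▸ dvd_zero 2)
  unfold Vv
  by_cases hbj : b ≤ j
  · rw [Finset.sum_eq_single b]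
    · rw [dd_apply, if_pos ⟨rfl, hb⟩, one_mul, v2_odd hb2, pow_zero, one_mul, Phi,
        v2_odd hb2, od_odd hb2, pow_zero, one_mul, dd_apply]
      by_cases h : j = b <;> simp [h, hj, hb]
    · intro m _ hm
      rw [dd_apply, if_neg (fun hh => hm hh.1), zero_mul]
    · intro h
      exact absurd (Finset.mem_Icc.mpr ⟨Nat.one_le_iff_ne_zero.mpr hb, hbj⟩) h
  · rw [Finset.sum_eq_zero, eq_comm, if_neg (by omega)]
    intro m hm
    rw [Finset.mem_Icc] at hm
    rw [dd_apply, if_neg (fun hh => by omega), zero_mul]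


lemma two_le_pow_of_ne {a b : ℕ} (hb : 1 ≤ b) (hne : ¬(a = 0 ∧ b = 1)) : 2 ≤ 2 ^ a * b := by
  rcases Nat.eq_zero_or_pos a with h0 | h0
  · have : b ≠ 1 := fun h => hne ⟨h0, h⟩
    rw [h0, pow_zero, one_mul]; omega
  · have h2 : 2 ≤ 2 ^ a := by
      calc 2 = 2 ^ 1 := (pow_one 2).symm
        _ ≤ 2 ^ a := Nat.pow_le_pow_right (by norm_num) h0
    calc 2 ≤ 2 ^ a := h2
      _ = 2 ^ a * 1 := (mul_one _).symm
      _ ≤ 2 ^ a * b := Nat.mul_le_mul_left _ hb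

lemma od_two : od 2 = 1 := by
  have := od_two_pow_mul (a := 1) (b := 1) (by norm_num)
  simpa using this

lemma V_ff {j : ℕ} (hj : j ≠ 0) : Vv ff j = if j = 2 then -1 else 0 := by
  classical
  set A := Nat.log 2 j with hA
  set T : Finset (ℕ × ℕ) := (range (A + 1)) ×ˢ (j.divisors.filter (fun b => ¬ 2 ∣ b)) with hT
  set h' : ℕ × ℕ → ℤ := fun q => (-1) ^ q.1 * (ff ^ q.1) (j / q.2) with hh'
  have hTmem : ∀ q ∈ T, q.1 ≤ A ∧ q.2 ∣ j ∧ ¬ 2 ∣ q.2 ∧ 1 ≤ q.2 := by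
    intro q hq
    rw [hT, Finset.mem_product, Finset.mem_range, Finset.mem_filter, Nat.mem_divisors] at hq
    exact ⟨by omega, hq.2.1.1, hq.2.2, Nat.pos_of_ne_zero (by rintro h; exact hq.2.2 (h ▸ dvd_zero 2))⟩
  have step1 : Vv ff j = ∑ q ∈ T, (if 2 ≤ 2 ^ q.1 * q.2 then (1:ℤ) else 0) * h' q := by
    unfold Vv
    refine Finset.sum_bij_ne_zero (fun m _ _ => (v2 m, od m)) ?_ ?_ ?_ ?_
    · intro m h1 h2
      rw [Finset.mem_Icc] at h1
      have hm : m ≠ 0 := by omega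
      have hX : (ff ^ v2 m * dd (od m)) j ≠ 0 := by
        intro h
        apply h2
        show ff m * ((-1) ^ v2 m * Phi m j) = 0
        rw [Phi, h, mul_zero, mul_zero]
      rw [mul_dd_apply _ (od_ne_zero hm) j] at hX
      have hdvd : od m ∣ j := by
        by_contra h
        rw [if_neg h] at hX; exact hX rfl
      rw [if_pos hdvd] at hX
      have hle : 2 ^ v2 m ≤ j / od m := by
        by_contra h
        exact hX (ff_pow_eq_zero (by omega))
      rw [hT, Finset.mem_product, Finset.mem_range, Finset.mem_filter, Nat.mem_divisors]
      refine ⟨?_, ⟨hdvd, hj⟩, od_not_two_dvd hm⟩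
      show v2 m < A + 1
      have : 2 ^ v2 m ≤ j := le_trans hle (Nat.div_le_self _ _)
      have := (Nat.le_log_iff_pow_le one_lt_two hj).mpr this
      rw [hA]; omega
    · intro m1 hm1 hn1 m2 hm2 hn2 heq
      rw [Finset.mem_Icc] at hm1 hm2
      have e1 := pow_v2_mul_od m1
      have e2 := pow_v2_mul_od m2
      rw [Prod.mk.injEq] at heq
      rw [← e1, ← e2, heq.1, heq.2]
    · rintro ⟨a, b⟩ hqT hne
      have hm := hTmem _ hqT
      simp only at hm
      obtain ⟨haA, hbj, hb2, hb1⟩ := hm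
      have hff : (ff ^ a) (j / b) ≠ 0 := by
        intro h
        apply hne
        rw [hh']
        simp only [h, mul_zero]
      have hle : 2 ^ a ≤ j / b := by
        by_contra h
        exact hff (ff_pow_eq_zero (by omega))
      have hmle : 2 ^ a * b ≤ j := by
        rw [← Nat.le_div_iff_mul_le hb1]
        exact hle
      have h2m : 2 ≤ 2 ^ a * b := by
        have hne2 : ¬ (a = 0 ∧ b = 1) := by
          rintro ⟨rfl, rfl⟩
          apply hne
          norm_num
        exact two_le_pow_of_ne hb1 hne2
      refine ⟨2 ^ a * b, Finset.mem_Icc.mpr ⟨by omega, hmle⟩, ?_, ?_⟩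
      · show ff (2 ^ a * b) * ((-1) ^ v2 (2 ^ a * b) * Phi (2 ^ a * b) j) ≠ 0
        rw [v2_two_pow_mul hb2, Phi, v2_two_pow_mul hb2, od_two_pow_mul hb2,
          mul_dd_apply _ (by omega) j, if_pos hbj, ff_apply, if_pos h2m]
        rw [one_mul]
        intro h
        rcases mul_eq_zero.mp h with h | h
        · exact pow_ne_zero _ (by norm_num) h
        · exact hff h
      · show (v2 (2 ^ a * b), od (2 ^ a * b)) = (a, b)
        rw [v2_two_pow_mul hb2, od_two_pow_mul hb2]
    · intro m h1 h2
      rw [Finset.mem_Icc] at h1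
      have hm : m ≠ 0 := by omega
      have hX : (ff ^ v2 m * dd (od m)) j ≠ 0 := by
        intro h
        apply h2
        show ff m * ((-1) ^ v2 m * Phi m j) = 0
        rw [Phi, h, mul_zero, mul_zero]
      rw [mul_dd_apply _ (od_ne_zero hm) j] at hX
      have hdvd : od m ∣ j := by
        by_contra h
        rw [if_neg h] at hX; exact hX rfl
      show ff m * ((-1) ^ v2 m * Phi m j) = _
      rw [hh']
      simp only
      rw [Phi, mul_dd_apply _ (od_ne_zero hm) j, if_pos hdvd, pow_v2_mul_od, ff_apply]
  have h01 : ((0 : ℕ), (1 : ℕ)) ∈ T := by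
    rw [hT, Finset.mem_product, Finset.mem_range, Finset.mem_filter]
    exact ⟨by omega, Nat.one_mem_divisors.mpr hj, by norm_num⟩
  have step2 : ∑ q ∈ T, (if 2 ≤ 2 ^ q.1 * q.2 then (1:ℤ) else 0) * h' q
      = (∑ q ∈ T, h' q) - (if j = 1 then 1 else 0) := by
    rw [← Finset.add_sum_erase T _ h01, ← Finset.add_sum_erase T h' h01]
    have e0 : (if 2 ≤ 2 ^ (0:ℕ) * (1:ℕ) then (1:ℤ) else 0) * h' (0, 1) = 0 := by norm_num
    have e1 : h' ((0:ℕ), (1:ℕ)) = if j = 1 then 1 else 0 := by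
      rw [hh']
      simp only [pow_zero, one_mul, Nat.div_one]
      rw [one_apply]
    have e2 : ∀ q ∈ T.erase (0, 1),
        (if 2 ≤ 2 ^ q.1 * q.2 then (1:ℤ) else 0) * h' q = h' q := by
      intro q hq
      rw [Finset.mem_erase] at hq
      have hm := hTmem _ hq.2
      have hne2 : ¬ (q.1 = 0 ∧ q.2 = 1) := by
        rintro ⟨ha, hb⟩
        exact hq.1 (Prod.ext ha hb)
      rw [if_pos (two_le_pow_of_ne hm.2.2.2 hne2), one_mul]
    rw [e0, e1, Finset.sum_congr rfl e2]
    ring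
  have step3 : ∑ q ∈ T, h' q = ∑ b ∈ j.divisors.filter (fun b => ¬ 2 ∣ b), (μ (j / b) : ℤ) := by
    rw [hT, Finset.sum_product, Finset.sum_comm]
    apply Finset.sum_congr rfl
    intro b _
    have hlt : j / b < 2 ^ (A + 1) :=
      lt_of_le_of_lt (Nat.div_le_self j b) (by rw [hA]; exact Nat.lt_pow_succ_log_self one_lt_two j)
    exact alt_moebius hlt
  have hBfil : j.divisors.filter (fun b => ¬ 2 ∣ b) = (od j).divisors := by
    ext b
    rw [Finset.mem_filter, Nat.mem_divisors, Nat.mem_divisors]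
    constructor
    · rintro ⟨⟨hbj, -⟩, hb2⟩
      refine ⟨?_, od_ne_zero hj⟩
      have hco : Nat.Coprime b (2 ^ v2 j) :=
        Nat.Coprime.pow_right _ (Nat.coprime_comm.mp ((Nat.prime_two.coprime_iff_not_dvd).mpr hb2))
      exact Nat.Coprime.dvd_of_dvd_mul_left hco (by rw [pow_v2_mul_od]; exact hbj)
    · rintro ⟨hbo, -⟩
      exact ⟨⟨hbo.trans (Nat.ordCompl_dvd j 2), hj⟩, fun h2b => od_not_two_dvd hj (h2b.trans hbo)⟩
  have step4 : ∑ b ∈ (od j).divisors, (μ (j / b) : ℤ)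
      = (if j = 1 then 1 else 0) - (if j = 2 then 1 else 0) := by
    have hrw : ∀ b ∈ (od j).divisors, (μ (j / b) : ℤ) = μ (2 ^ v2 j) * μ (od j / b) := by
      intro b hb
      rw [Nat.mem_divisors] at hb
      have hjb : j / b = 2 ^ v2 j * (od j / b) := by
        rw [← Nat.mul_div_assoc _ hb.1, pow_v2_mul_od]
      have hodd : ¬ 2 ∣ (od j / b) := fun h => od_not_two_dvd hj (h.trans (Nat.div_dvd_of_dvd hb.1))
      have hco : Nat.Coprime (2 ^ v2 j) (od j / b) :=
        Nat.Coprime.pow_left _ ((Nat.prime_two.coprime_iff_not_dvd).mpr hodd)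
      rw [hjb, isMultiplicative_moebius.map_mul_of_coprime hco]
    rw [Finset.sum_congr rfl hrw, ← Finset.mul_sum]
    rw [Nat.sum_div_divisors]
    have hsum : ∑ b ∈ (od j).divisors, (μ b : ℤ) = if od j = 1 then 1 else 0 := by
      have hz := coe_mul_zeta_apply (f := (μ : ArithmeticFunction ℤ)) (x := od j)
      rw [moebius_mul_coe_zeta] at hz
      rw [← hz, one_apply]
    rw [hsum]
    by_cases hB : od j = 1
    · rw [if_pos hB, mul_one]
      have hj2 : j = 2 ^ v2 j := by
        conv_lhs => rw [← pow_v2_mul_od j]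
        rw [hB, mul_one]
      rcases na : v2 j with _ | n
      · rw [na, pow_zero] at hj2
        rw [pow_zero, hj2]
        norm_num
      · rcases n with _ | n
        · rw [na] at hj2
          norm_num at hj2
          rw [hj2]
          norm_num [moebius_apply_prime Nat.prime_two]
        · rw [na] at hj2
          rw [moebius_apply_prime_pow Nat.prime_two (by omega), if_neg (by omega)]
          have hj1 : j ≠ 1 := by
            rw [hj2]
            intro h
            have h1 : (1:ℕ) < 2 ^ (n + 1 + 1) := Nat.one_lt_pow (by omega) (by norm_num)
            omega
          have hjt : j ≠ 2 := by
            rw [hj2]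
            intro h
            have h1 : (2:ℕ) ^ (n + 1 + 1) = 2 ^ 1 := by rw [h, pow_one]
            have := Nat.pow_right_injective (le_refl 2) h1
            omega
          rw [if_neg hj1, if_neg hjt]
          norm_num
    · rw [if_neg hB, mul_zero]
      have hj1 : j ≠ 1 := fun h => hB (by rw [h]; exact od_one)
      have hjt : j ≠ 2 := fun h => hB (by rw [h]; exact od_two)
      rw [if_neg hj1, if_neg hjt, sub_zero]
  rw [step1, step2, step3, hBfil, step4]
  by_cases h2 : j = 2
  · rw [if_pos h2, if_neg (by omega), if_pos h2]
    norm_num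
  · rw [if_neg h2, if_neg h2]
    ring


lemma V_ffpow (k : ℕ) {j : ℕ} (hj : j ≠ 0) :
    Vv (ff ^ k) j = (-1) ^ k * (if j = 2 ^ k then 1 else 0) := by
  induction k generalizing j with
  | zero =>
    rw [pow_zero, pow_zero, V_one hj, one_mul, pow_zero]
  | succ k ih =>
    rw [pow_succ', V_mul _ _ hj]
    have hterm : ∀ p ∈ j.divisorsAntidiagonal, Vv ff p.1 * Vv (ff ^ k) p.2
        = if p = ((2:ℕ), 2 ^ k) then (-1 : ℤ) ^ (k + 1) else 0 := by
      intro p hp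
      rw [Nat.mem_divisorsAntidiagonal] at hp
      have hp1 : p.1 ≠ 0 := by
        rintro h; rw [h, zero_mul] at hp; exact hj hp.1.symm
      have hp2 : p.2 ≠ 0 := by
        rintro h; rw [h, mul_zero] at hp; exact hj hp.1.symm
      rw [V_ff hp1, ih hp2]
      rcases p with ⟨x, y⟩
      by_cases h1 : x = 2 <;> by_cases h2 : y = 2 ^ k <;>
        simp [h1, h2, Prod.ext_iff] <;> ring
    rw [Finset.sum_congr rfl hterm, Finset.sum_ite_eq' _ ((2:ℕ), 2 ^ k) _]
    by_cases hmem : ((2:ℕ), 2 ^ k) ∈ j.divisorsAntidiagonal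
    · rw [if_pos hmem]
      rw [Nat.mem_divisorsAntidiagonal] at hmem
      have hjj : j = 2 ^ (k + 1) := by rw [← hmem.1]; ring
      rw [if_pos hjj, mul_one]
    · rw [if_neg hmem]
      have hne : j ≠ 2 ^ (k + 1) := by
        intro h
        apply hmem
        rw [Nat.mem_divisorsAntidiagonal]
        exact ⟨by rw [h]; ring, hj⟩
      rw [if_neg hne, mul_zero]

/-- `Z⁻¹ = X · Z · X` where `X = diag((-1)^{v₂(i)})`: the sum over all `m ∈ ℕ⁺` of
`(-1)^{v₂(i)+v₂(m)} α(i,m) α(m,j)` is `δ_{i,j}`; the sum is finite since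
`α(i,m) = 0` for `m < i` and `α(m,j) = 0` for `m > j`, so it may be taken
over `i ≤ m ≤ j`. -/
theorem stmt8 (i j : ℕ) (hi : 0 < i) (hj : 0 < j) :
    ∑ m ∈ Finset.Icc i j,
        (-1 : ℤ) ^ (v2 i + v2 m) * (alphaEnt i m : ℤ) * (alphaEnt m j : ℤ)
      = if i = j then 1 else 0 := by
  have hi0 : i ≠ 0 := by omega
  have hj0 : j ≠ 0 := by omega
  have hterm : ∀ m ∈ Finset.Icc i j,
      (-1 : ℤ) ^ (v2 i + v2 m) * (alphaEnt i m : ℤ) * (alphaEnt m j : ℤ)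
        = (-1) ^ v2 i * ((ff ^ v2 i * dd (od i)) m * ((-1) ^ v2 m * Phi m j)) := by
    intro m hm
    rw [Finset.mem_Icc] at hm
    have hm0 : m ≠ 0 := by omega
    rw [alphaEnt_eq hi0 m, alphaEnt_eq hm0 j, Phi, pow_add]
    ring
  rw [Finset.sum_congr rfl hterm, ← Finset.mul_sum]
  have hext : ∑ m ∈ Finset.Icc i j, ((ff ^ v2 i * dd (od i)) m * ((-1) ^ v2 m * Phi m j))
      = Vv (ff ^ v2 i * dd (od i)) j := by
    unfold Vv
    apply Finset.sum_subset (Finset.Icc_subset_Icc_left (by omega))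
    intro m hm1 hm2
    rw [Finset.mem_Icc] at hm1
    have hmi : m < i := by
      by_contra h
      exact hm2 (Finset.mem_Icc.mpr ⟨by omega, hm1.2⟩)
    have hz : (ff ^ v2 i * dd (od i)) m = 0 := by
      rw [mul_dd_apply _ (od_ne_zero hi0) m]
      split
      · apply ff_pow_eq_zero
        rw [Nat.div_lt_iff_lt_mul (Nat.pos_of_ne_zero (od_ne_zero hi0)), pow_v2_mul_od]
        exact hmi
      · rfl
    rw [hz, zero_mul]
  rw [hext, V_mul _ _ hj0]
  have hod2 : ¬ 2 ∣ od i := od_not_two_dvd hi0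
  have hterm2 : ∀ p ∈ j.divisorsAntidiagonal, Vv (ff ^ v2 i) p.1 * Vv (dd (od i)) p.2
      = if p = ((2 ^ v2 i : ℕ), od i) then (-1 : ℤ) ^ v2 i else 0 := by
    intro p hp
    rw [Nat.mem_divisorsAntidiagonal] at hp
    have hp1 : p.1 ≠ 0 := by
      rintro h; rw [h, zero_mul] at hp; exact hj0 hp.1.symm
    have hp2 : p.2 ≠ 0 := by
      rintro h; rw [h, mul_zero] at hp; exact hj0 hp.1.symm
    rw [V_ffpow (v2 i) hp1, V_dd hod2 hp2]
    rcases p with ⟨x, y⟩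
    by_cases h1 : x = 2 ^ v2 i <;> by_cases h2 : y = od i <;>
      simp [h1, h2, Prod.ext_iff] <;> ring
  rw [Finset.sum_congr rfl hterm2, Finset.sum_ite_eq' _ ((2 ^ v2 i : ℕ), od i) _]
  by_cases hmem : ((2 ^ v2 i : ℕ), od i) ∈ j.divisorsAntidiagonal
  · rw [if_pos hmem]
    rw [Nat.mem_divisorsAntidiagonal] at hmem
    have hij : i = j := by rw [← hmem.1, pow_v2_mul_od]
    rw [if_pos hij, ← pow_add, Even.neg_one_pow ⟨v2 i, rfl⟩]
  · rw [if_neg hmem, mul_zero]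
    have hne : i ≠ j := by
      intro h
      apply hmem
      rw [Nat.mem_divisorsAntidiagonal]
      exact ⟨by rw [pow_v2_mul_od, h], hj0⟩
    rw [if_neg hne]
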